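/- In a group G, suppose elements A_0, A_1, B_0, B_1, C_0, C_1, C_2, C_3, π_0, π_1, π_2, \bar{π}_0, \bar{π}_1, \bar{π}_2 satisfy the relations: π_m² = 1 and \bar{π}_m² = 1 for m = 0,1; π_0 A_0 = A_1 π_1 π_0; π_0 B_0 = B_1 π_1 π_0 (instance of π_q X_q = X_{q+1} π_q π_{q+1}); π_1 A_1 = A_2 π_1 π_2 with A_2 identified via relations; π_0 π_1 π_0 = π_1 π_0 π_1; \bar{π}_1 A_1 = π_1 \bar{π}_2; \bar{π}_0 A_0 = π_0 \bar{π}_1; π_0 \bar{π}_1 π_0 = \bar{π}_1 π_0 \bar{π}_1; A_0 B_1 B_0 = B_0 A_1 A_0 π_1; and X_q Z_m = Z_m X_{q+1}-type conjugation relations identifying Z_{q+1} with A_0^{-q} Z_1 A_0^{q} for Z ∈ {A, B, C, π, \bar{π}}. Then all the listed generators lie in the commutator subgroup of the subgroup they generate; i.e., the group they generate is perfect. -/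

import Mathlib

/-- Brin's relations for `2V`: a group generated by elements `A_i, B_i, C_i,
π_i, π̄_i` subject to the 17 families of relations is perfect (its
abelianization is trivial). -/
theorem brin_relations_perfect {G : Type*} [Group G]
    (A B C π π' : ℕ → G)
    (hgen : Subgroup.closure
      (Set.range A ∪ Set.range B ∪ Set.range C ∪ Set.range π ∪ Set.range π')
        = ⊤)
    -- 1. X_q Y_m = Y_m X_{q+1} for m < q, X, Y ∈ {A, B}
    (r1 : ∀ X Y : ℕ → G, (X = A ∨ X = B) → (Y = A ∨ Y = B) →
      ∀ q m, m < q → X q * Y m = Y m * X (q + 1))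
    -- 2. π_q X_m = X_m π_{q+1} for m < q
    (r2 : ∀ X : ℕ → G, (X = A ∨ X = B) →
      ∀ q m, m < q → π q * X m = X m * π (q + 1))
    -- 3. π_q X_q = X_{q+1} π_q π_{q+1}
    (r3 : ∀ X : ℕ → G, (X = A ∨ X = B) →
      ∀ q, π q * X q = X (q + 1) * π q * π (q + 1))
    -- 4. π_q X_m = X_m π_q for m > q + 1
    (r4 : ∀ X : ℕ → G, (X = A ∨ X = B) →
      ∀ q m, m > q + 1 → π q * X m = X m * π q)
    -- 5. π̄_q X_m = X_m π̄_{q+1} for m < q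
    (r5 : ∀ X : ℕ → G, (X = A ∨ X = B) →
      ∀ q m, m < q → π' q * X m = X m * π' (q + 1))
    -- 6. π̄_m A_m = π_m π̄_{m+1}
    (r6 : ∀ m, π' m * A m = π m * π' (m + 1))
    -- 7. π̄_m B_m = C_{m+1} π_m π̄_{m+1}
    (r7 : ∀ m, π' m * B m = C (m + 1) * π m * π' (m + 1))
    -- 8. C_q X_m = X_m C_{q+1} for m < q
    (r8 : ∀ X : ℕ → G, (X = A ∨ X = B) →
      ∀ q m, m < q → C q * X m = X m * C (q + 1))
    -- 9. C_m A_m = B_m C_{m+2} π_{m+1}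
    (r9 : ∀ m, C m * A m = B m * C (m + 2) * π (m + 1))
    -- 10. π_q C_m = C_m π_q for m > q + 1
    (r10 : ∀ q m, m > q + 1 → π q * C m = C m * π q)
    -- 11. A_m B_{m+1} B_m = B_m A_{m+1} A_m π_{m+1}
    (r11 : ∀ m, A m * B (m + 1) * B m = B m * A (m + 1) * A m * π (m + 1))
    -- 12. π_q π_m = π_m π_q for |m - q| ≥ 2
    (r12 : ∀ q m, m + 2 ≤ q ∨ q + 2 ≤ m → π q * π m = π m * π q)
    -- 13. π_m π_{m+1} π_m = π_{m+1} π_m π_{m+1}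
    (r13 : ∀ m, π m * π (m + 1) * π m = π (m + 1) * π m * π (m + 1))
    -- 14. π̄_q π_m = π_m π̄_q for q ≥ m + 2
    (r14 : ∀ q m, m + 2 ≤ q → π' q * π m = π m * π' q)
    -- 15. π_m π̄_{m+1} π_m = π̄_{m+1} π_m π̄_{m+1}
    (r15 : ∀ m, π m * π' (m + 1) * π m = π' (m + 1) * π m * π' (m + 1))
    -- 16. π_m² = 1
    (r16 : ∀ m, π m * π m = 1)
    -- 17. π̄_m² = 1
    (r17 : ∀ m, π' m * π' m = 1) :
    commutator G = ⊤ := by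
  -- Work in the abelianization.
  let f : G →* Abelianization G := Abelianization.of
  have mem : ∀ x : G, f x = 1 → x ∈ commutator G := fun x h =>
    (QuotientGroup.eq_one_iff x).mp h
  -- images of relations under f
  have F : ∀ {x y : G}, x = y → f x = f y := fun h => congrArg f h
  -- cancellation in the commutative group
  have cancel : ∀ {x y z : Abelianization G}, x * y = y * z → x = z := by
    intro x y z h
    rw [mul_comm y z] at h
    exact mul_right_cancel h
  -- πs are eventually constant
  have hπs : ∀ q, f (π (q + 1)) = f (π (q + 2)) := by
    intro q
    have h := F (r2 A (Or.inl rfl) (q + 1) 0 (Nat.succ_pos q))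
    simp only [map_mul] at h
    exact cancel h
  have hπ1 : ∀ q, f (π (q + 1)) = f (π 1) := by
    intro q
    induction q with
    | zero => rfl
    | succ n ih => rw [← hπs n]; exact ih
  -- A q eventually constant
  have hAs : ∀ q, f (A (q + 1)) = f (A (q + 2)) := by
    intro q
    have h := F (r1 A A (Or.inl rfl) (Or.inl rfl) (q + 1) 0 (Nat.succ_pos q))
    simp only [map_mul] at h
    rw [mul_comm (f (A (q+1))) (f (A 0))] at h
    exact mul_left_cancel h
  -- π 2 = 1 in the abelianization
  have hπ2 : f (π 2) = 1 := by
    have h2 : f (A 1) = f (A 2) := hAs 0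
    have h := F (r3 A (Or.inl rfl) 1)
    simp only [map_mul] at h
    rw [← h2, mul_comm (f (π 1)) (f (A 1)), mul_assoc] at h
    exact mul_eq_left.mp (mul_left_cancel h).symm
  have hπ1' : f (π 1) = 1 := (hπ1 1).symm.trans hπ2
  have hπ0 : f (π 0) = 1 := by
    have h := F (r13 0)
    simp only [map_mul, hπ1', mul_one, one_mul] at h
    exact mul_left_cancel (h.trans (mul_one (f (π 0))).symm)
  have hπ : ∀ q, f (π q) = 1 := by
    intro q
    cases q with
    | zero => exact hπ0
    | succ n => exact (hπ1 n).trans hπ1'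
  -- π' eventually constant
  have hπ's : ∀ q, f (π' (q + 1)) = f (π' (q + 2)) := by
    intro q
    have h := F (r5 A (Or.inl rfl) (q + 1) 0 (Nat.succ_pos q))
    simp only [map_mul] at h
    exact cancel h
  have hπ'1 : ∀ q, f (π' (q + 1)) = f (π' 1) := by
    intro q
    induction q with
    | zero => rfl
    | succ n ih => rw [← hπ's n]; exact ih
  -- A 1 = 1
  have hA1 : f (A 1) = 1 := by
    have h := F (r6 1)
    simp only [map_mul, hπ] at h
    rw [one_mul, hπ'1 1] at h
    exact mul_eq_right.mp (mul_comm (f (π' 1)) (f (A 1)) ▸ h)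
  have hA0 : f (A 0) = 1 := by
    have h := F (r3 A (Or.inl rfl) 0)
    simp only [map_mul, hπ, one_mul, mul_one] at h
    exact h.trans hA1
  have hA : ∀ q, f (A q) = 1 := by
    intro q
    cases q with
    | zero => exact hA0
    | succ n =>
      induction n with
      | zero => exact hA1
      | succ k ih => rw [← hAs k]; exact ih
  -- π' 1 = 1
  have hπ'1v : f (π' 1) = 1 := by
    have h := F (r15 0)
    simp only [map_mul, hπ, one_mul, mul_one] at h
    exact (left_eq_mul.mp h)
  have hπ'0 : f (π' 0) = 1 := by
    have h := F (r6 0)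
    simp only [map_mul, hπ, hA0, one_mul, mul_one] at h
    rw [h]
    exact hπ'1v
  have hπ' : ∀ q, f (π' q) = 1 := by
    intro q
    cases q with
    | zero => exact hπ'0
    | succ n => exact ((hπ'1 n).trans hπ'1v)
  -- B
  have hB1 : f (B 1) = 1 := by
    have h := F (r11 0)
    simp only [map_mul, hA, hπ, one_mul, mul_one] at h
    exact mul_eq_right.mp h
  have hB0 : f (B 0) = 1 := by
    have h := F (r3 B (Or.inr rfl) 0)
    simp only [map_mul, hπ, one_mul, mul_one] at h
    exact h.trans hB1
  have hBs : ∀ q, f (B (q + 1)) = f (B (q + 2)) := by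
    intro q
    have h := F (r1 B B (Or.inr rfl) (Or.inr rfl) (q + 1) 0 (Nat.succ_pos q))
    simp only [map_mul] at h
    rw [mul_comm (f (B (q+1))) (f (B 0))] at h
    exact mul_left_cancel h
  have hB : ∀ q, f (B q) = 1 := by
    intro q
    cases q with
    | zero => exact hB0
    | succ n =>
      induction n with
      | zero => exact hB1
      | succ k ih => rw [← hBs k]; exact ih
  -- C
  have hCs : ∀ m, f (C (m + 1)) = 1 := by
    intro m
    have h := F (r7 m)
    simp only [map_mul, hπ, hπ', hB, one_mul, mul_one] at h
    exact h.symm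
  have hC0 : f (C 0) = 1 := by
    have h := F (r9 0)
    have hc2 : f (C (0 + 2)) = 1 := hCs 1
    simp only [map_mul, hA, hπ, hB, hc2, one_mul, mul_one] at h
    exact h
  have hC : ∀ q, f (C q) = 1 := by
    intro q
    cases q with
    | zero => exact hC0
    | succ n => exact hCs n
  -- conclude
  rw [eq_top_iff, ← hgen]
  rw [Subgroup.closure_le]
  rintro x (((((⟨q, rfl⟩ | ⟨q, rfl⟩) | ⟨q, rfl⟩) | ⟨q, rfl⟩) | ⟨q, rfl⟩))
  · exact mem _ (hA q)
  · exact mem _ (hB q)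
  · exact mem _ (hC q)
  · exact mem _ (hπ q)
  · exact mem _ (hπ' q)
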